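/- Let n ≥ 2 and let a_{ij} ∈ ℂ for 1 ≤ i ≤ n+1 and 1 ≤ j ≤ n, forming an (n+1)×n array A. Then det(A({2,…,n+1},{1,…,n})) · det(A({1,…,n−1},{2,…,n})) = det(A({1,…,n−1,n+1},{1,…,n})) · det(A({2,…,n},{2,…,n})) − det(A({1,…,n},{1,…,n})) · det(A({2,…,n−1,n+1},{2,…,n})). -/

import Mathlib

open Matrix Fin

section Helpers

variable {R : Type*} [CommRing R]

lemma det_single_column {n : ℕ} (M : Matrix (Fin (n+1)) (Fin (n+1)) R) (p j : Fin (n+1))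
    (h : ∀ i, M i j = if i = p then 1 else 0) :
    M.det = (-1)^((p:ℕ)+(j:ℕ)) * (M.submatrix p.succAbove j.succAbove).det := by
  rw [Matrix.det_succ_column M j, Finset.sum_eq_single p]
  · rw [h p, if_pos rfl, mul_one]
  · intro i _ hip; rw [h i, if_neg hip]; ring
  · simp

lemma det_single_row {n : ℕ} (M : Matrix (Fin (n+1)) (Fin (n+1)) R) (p q : Fin (n+1))
    (h : ∀ j, M p j = if j = q then 1 else 0) :
    M.det = (-1)^((p:ℕ)+(q:ℕ)) * (M.submatrix p.succAbove q.succAbove).det := by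
  rw [Matrix.det_succ_row M p, Finset.sum_eq_single q]
  · rw [h q, if_pos rfl, mul_one]
  · intro j _ hjq; rw [h j, if_neg hjq]; ring
  · simp

lemma det_updateRow_sum' {N : ℕ} (D : Matrix (Fin N) (Fin N) R) (p : Fin N)
    (v : Fin N → (Fin N → R)) (c : Fin N → R) :
    (D.updateRow p (∑ i, c i • v i)).det = ∑ i, c i * (D.updateRow p (v i)).det := by
  have h : ∀ w, (D.updateRow p w).det
      = Matrix.detRowAlternating (Function.update (fun i => D i) p w) := fun w => rfl
  rw [h, AlternatingMap.map_update_sum]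
  refine Finset.sum_congr rfl fun i _ => ?_
  rw [h, AlternatingMap.map_update_smul, smul_eq_mul]

lemma updateRow_comm' {N : ℕ} (M : Matrix (Fin N) (Fin N) R) {i j : Fin N} (h : i ≠ j)
    (u v : Fin N → R) :
    (M.updateRow i u).updateRow j v = (M.updateRow j v).updateRow i u := by
  ext a b
  simp only [Matrix.updateRow_apply]
  split_ifs with h1 h2 <;> simp_all

lemma det_two_single {n : ℕ} (i r : Fin (n+2)) :
    (((1 : Matrix (Fin (n+2)) (Fin (n+2)) R).updateRow (Fin.last (n+1))
        ((1 : Matrix (Fin (n+2)) (Fin (n+2)) R) r)).updateRow 0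
        ((1 : Matrix (Fin (n+2)) (Fin (n+2)) R) i)).det
    = (if i = 0 then (if r = Fin.last (n+1) then 1 else 0) else 0)
      + (if i = Fin.last (n+1) then (if r = 0 then (-1 : R) else 0) else 0) := by
  have h0l : (0 : Fin (n+2)) ≠ Fin.last (n+1) := by
    simp [Fin.ext_iff]
  set M := (((1 : Matrix (Fin (n+2)) (Fin (n+2)) R).updateRow (Fin.last (n+1))
        ((1 : Matrix (Fin (n+2)) (Fin (n+2)) R) r)).updateRow 0
        ((1 : Matrix (Fin (n+2)) (Fin (n+2)) R) i)) with hM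
  have hrow0 : M 0 = (1 : Matrix (Fin (n+2)) (Fin (n+2)) R) i := by
    rw [hM, updateRow_self]
  have hrowlast : M (Fin.last (n+1)) = (1 : Matrix (Fin (n+2)) (Fin (n+2)) R) r := by
    rw [hM, updateRow_ne h0l.symm, updateRow_self]
  have hrowmid : ∀ k : Fin (n+2), k ≠ 0 → k ≠ Fin.last (n+1) →
      M k = (1 : Matrix (Fin (n+2)) (Fin (n+2)) R) k := by
    intro k hk0 hkl
    rw [hM, updateRow_ne hk0, updateRow_ne hkl]
  by_cases hi0 : i = 0
  · subst hi0
    by_cases hrl : r = Fin.last (n+1)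
    · subst hrl
      rw [if_pos rfl, if_pos rfl, if_neg h0l, add_zero]
      have : M = 1 := by
        rw [hM, updateRow_eq_self, updateRow_eq_self]
      rw [this, det_one]
    · rw [if_pos rfl, if_neg hrl, if_neg h0l, add_zero]
      refine Matrix.det_zero_of_row_eq (show r ≠ Fin.last (n+1) from hrl) ?_
      rw [hrowlast]
      rcases eq_or_ne r 0 with h | h
      · rw [h, hrow0]
      · rw [hrowmid r h hrl]
  · by_cases hil : i = Fin.last (n+1)
    · subst hil
      rw [if_neg hi0, if_pos rfl, zero_add]
      by_cases hr0 : r = 0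
      · subst hr0
        rw [if_pos rfl]
        have : M = (Equiv.swap (0 : Fin (n+2)) (Fin.last (n+1))).toPEquiv.toMatrix := by
          ext a b
          rcases eq_or_ne a 0 with ha | ha
          · subst ha
            simp [hrow0, Matrix.one_apply, PEquiv.toMatrix_apply, Equiv.toPEquiv_apply, Equiv.swap_apply_left, eq_comm]
          · rcases eq_or_ne a (Fin.last (n+1)) with ha' | ha'
            · subst ha'
              simp [hrowlast, Matrix.one_apply, PEquiv.toMatrix_apply, Equiv.toPEquiv_apply,
                Equiv.swap_apply_right, eq_comm]
            · rw [hrowmid a ha ha']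
              simp [Matrix.one_apply, PEquiv.toMatrix_apply, Equiv.toPEquiv_apply,
                Equiv.swap_apply_of_ne_of_ne ha ha', eq_comm]
        rw [this, Matrix.det_permutation, Equiv.Perm.sign_swap h0l]
        simp
      · rw [if_neg hr0]
        rcases eq_or_ne r (Fin.last (n+1)) with h | h
        · subst h
          exact Matrix.det_zero_of_row_eq h0l (by rw [hrow0, hrowlast])
        · refine Matrix.det_zero_of_row_eq h (by rw [hrowmid r hr0 h, hrowlast])
    · rw [if_neg hi0, if_neg hil, add_zero]
      exact Matrix.det_zero_of_row_eq (Ne.symm hi0) (by rw [hrow0, hrowmid i hi0 hil])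

lemma dodgson_mul {n : ℕ} (X : Matrix (Fin (n+2)) (Fin (n+2)) R) :
    X.det * (X.det * (X.submatrix (fun i : Fin n => i.succ.castSucc)
        (fun j : Fin n => j.succ.castSucc)).det)
    = X.det * ((X.submatrix Fin.succ Fin.succ).det
        * (X.submatrix Fin.castSucc Fin.castSucc).det
      - (X.submatrix Fin.castSucc Fin.succ).det
        * (X.submatrix Fin.succ Fin.castSucc).det) := by
  have h0l : (0 : Fin (n+2)) ≠ Fin.last (n+1) := by simp [Fin.ext_iff]
  set O : Matrix (Fin (n+2)) (Fin (n+2)) R := 1 with hO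
  set B : Matrix (Fin (n+2)) (Fin (n+2)) R := adjugate X with hB
  set C : Matrix (Fin (n+2)) (Fin (n+2)) R :=
    (O.updateRow (Fin.last (n+1)) (B (Fin.last (n+1)))).updateRow 0 (B 0) with hC
  -- the "unit vector" expansion of an arbitrary vector
  have hx : ∀ x : Fin (n+2) → R, x = ∑ i, x i • O i := by
    intro x
    ext j
    simp [hO, Matrix.one_apply, Finset.sum_apply, Pi.smul_apply, mul_ite, Finset.sum_ite_eq,
      Finset.mem_univ]
  -- Step 1 : C * X
  have h1 : C * X = (X.updateRow (Fin.last (n+1))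
      (X.det • O (Fin.last (n+1)))).updateRow 0 (X.det • O 0) := by
    ext i j
    rcases eq_or_ne i 0 with hi | hi
    · subst hi
      rw [Matrix.mul_apply, Matrix.updateRow_self]
      have : ∀ r, C 0 r = B 0 r := fun r => by rw [hC, Matrix.updateRow_self]
      calc ∑ r, C 0 r * X r j = ∑ r, B 0 r * X r j := by
            refine Finset.sum_congr rfl fun r _ => by rw [this r]
        _ = (B * X) 0 j := (Matrix.mul_apply).symm
        _ = (X.det • (1 : Matrix (Fin (n+2)) (Fin (n+2)) R)) 0 j := by rw [hB, adjugate_mul]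
        _ = (X.det • O 0) j := by simp [hO]
    · rw [Matrix.updateRow_ne hi]
      rcases eq_or_ne i (Fin.last (n+1)) with hil | hil
      · subst hil
        rw [Matrix.mul_apply, Matrix.updateRow_self]
        have : ∀ r, C (Fin.last (n+1)) r = B (Fin.last (n+1)) r := fun r => by
          rw [hC, Matrix.updateRow_ne h0l.symm, Matrix.updateRow_self]
        calc ∑ r, C (Fin.last (n+1)) r * X r j
            = ∑ r, B (Fin.last (n+1)) r * X r j := by
              refine Finset.sum_congr rfl fun r _ => by rw [this r]
          _ = (B * X) (Fin.last (n+1)) j := (Matrix.mul_apply).symm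
          _ = (X.det • (1 : Matrix (Fin (n+2)) (Fin (n+2)) R)) (Fin.last (n+1)) j := by
              rw [hB, adjugate_mul]
          _ = (X.det • O (Fin.last (n+1))) j := by simp [hO]
      · rw [Matrix.updateRow_ne hil, Matrix.mul_apply]
        have : ∀ r, C i r = O i r := fun r => by
          rw [hC, Matrix.updateRow_ne hi, Matrix.updateRow_ne hil]
        calc ∑ r, C i r * X r j = ∑ r, O i r * X r j := by
              refine Finset.sum_congr rfl fun r _ => by rw [this r]
          _ = (O * X) i j := (Matrix.mul_apply).symm
          _ = X i j := by rw [hO, one_mul]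
  -- Step 2 : determinant of the right-hand side of h1
  set E : Matrix (Fin (n+2)) (Fin (n+2)) R :=
    (X.updateRow (Fin.last (n+1)) (O (Fin.last (n+1)))).updateRow 0 (O 0) with hE
  have h3 : ((X.updateRow (Fin.last (n+1))
      (X.det • O (Fin.last (n+1)))).updateRow 0 (X.det • O 0)).det
      = X.det * (X.det * E.det) := by
    rw [Matrix.det_updateRow_smul]
    congr 1
    rw [updateRow_comm' _ h0l.symm, Matrix.det_updateRow_smul, updateRow_comm' _ h0l]
  -- Step 3 : E.det is the inner minor
  have h4 : E.det = (X.submatrix (fun i : Fin n => i.succ.castSucc)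
      (fun j : Fin n => j.succ.castSucc)).det := by
    have e0 : ∀ j, E 0 j = if j = (0 : Fin (n+2)) then 1 else 0 := by
      intro j
      rw [hE, Matrix.updateRow_self, hO, Matrix.one_apply]
      exact if_congr eq_comm rfl rfl
    rw [det_single_row E 0 0 e0]
    simp only [Fin.val_zero, add_zero, pow_zero, one_mul, Fin.succAbove_zero]
    set E1 : Matrix (Fin (n+1)) (Fin (n+1)) R := E.submatrix Fin.succ Fin.succ with hE1
    have e1 : ∀ j, E1 (Fin.last n) j = if j = Fin.last n then 1 else 0 := by
      intro j
      rw [hE1, Matrix.submatrix_apply, Fin.succ_last, hE,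
        Matrix.updateRow_ne h0l.symm, Matrix.updateRow_self, hO, Matrix.one_apply]
      exact if_congr (by rw [eq_comm, Fin.succ_eq_last_succ]) rfl rfl
    rw [det_single_row E1 (Fin.last n) (Fin.last n) e1]
    have hsig : ((-1 : R)) ^ ((Fin.last n : ℕ) + (Fin.last n : ℕ)) = 1 := by
      rw [Fin.val_last, ← two_mul, pow_mul, neg_one_sq, one_pow]
    rw [hsig, one_mul]
    congr 1
    ext i j
    rw [Fin.succAbove_last, hE1, Matrix.submatrix_apply, Matrix.submatrix_apply,
      Matrix.submatrix_apply, hE, Fin.succ_castSucc, Fin.succ_castSucc,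
      Matrix.updateRow_ne (show (i.succ.castSucc : Fin (n+2)) ≠ 0 by simp [Fin.ext_iff]),
      Matrix.updateRow_ne (Fin.castSucc_lt_last _).ne]
  -- Step 4 : det C
  have g : ∀ i : Fin (n+2), ((O.updateRow (Fin.last (n+1))
        (B (Fin.last (n+1)))).updateRow 0 (O i)).det
      = (if i = 0 then B (Fin.last (n+1)) (Fin.last (n+1)) else 0)
        + (if i = Fin.last (n+1) then -(B (Fin.last (n+1)) 0) else 0) := by
    intro i
    rw [updateRow_comm' _ h0l.symm, hx (B (Fin.last (n+1))), det_updateRow_sum' (v := fun i => O i)]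
    have : ∀ r : Fin (n+2), ((O.updateRow 0 (O i)).updateRow (Fin.last (n+1)) (O r)).det
        = (if i = 0 then (if r = Fin.last (n+1) then 1 else 0) else 0)
          + (if i = Fin.last (n+1) then (if r = 0 then (-1 : R) else 0) else 0) := by
      intro r
      rw [updateRow_comm' _ h0l, hO]
      exact det_two_single i r
    rw [Finset.sum_congr rfl fun r _ => by rw [this r]]
    by_cases hi0 : i = 0
    · subst hi0
      simp [h0l, hO, Matrix.one_apply, mul_ite, mul_one, mul_zero, Finset.sum_ite_eq',
        if_neg h0l]
    · by_cases hil : i = Fin.last (n+1)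
      · subst hil
        simp [h0l.symm, hO, Matrix.one_apply, mul_ite, mul_one, mul_zero, Finset.sum_ite_eq',
          if_neg (Ne.symm h0l)]
      · simp [hi0, hil]
  have h5 : C.det = B 0 0 * B (Fin.last (n+1)) (Fin.last (n+1))
      - B 0 (Fin.last (n+1)) * B (Fin.last (n+1)) 0 := by
    rw [hC, hx (B 0), det_updateRow_sum' (v := fun i => O i), Finset.sum_congr rfl fun i _ => by rw [g i]]
    simp [mul_add, mul_ite, mul_one, mul_zero, hO, Matrix.one_apply, Finset.sum_add_distrib,
      Finset.sum_ite_eq', sub_eq_add_neg]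
  -- Step 5 : adjugate entries
  have hBss : B 0 0 = (X.submatrix Fin.succ Fin.succ).det := by
    rw [hB, Matrix.adjugate_fin_succ_eq_det_submatrix]
    simp
  have hBcc : B (Fin.last (n+1)) (Fin.last (n+1))
      = (X.submatrix Fin.castSucc Fin.castSucc).det := by
    rw [hB, Matrix.adjugate_fin_succ_eq_det_submatrix]
    have : ((-1 : R)) ^ ((Fin.last (n+1) : ℕ) + (Fin.last (n+1) : ℕ)) = 1 := by
      rw [Fin.val_last, ← two_mul, pow_mul, neg_one_sq, one_pow]
    rw [this, one_mul, Fin.succAbove_last]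
  have hBcs : B 0 (Fin.last (n+1)) = (-1 : R)^(n+1) * (X.submatrix Fin.castSucc Fin.succ).det := by
    rw [hB, Matrix.adjugate_fin_succ_eq_det_submatrix]
    simp [Fin.succAbove_last]
  have hBsc : B (Fin.last (n+1)) 0 = (-1 : R)^(n+1) * (X.submatrix Fin.succ Fin.castSucc).det := by
    rw [hB, Matrix.adjugate_fin_succ_eq_det_submatrix]
    simp [Fin.succAbove_last]
  -- final combination
  have hdet : C.det * X.det = X.det * (X.det * E.det) := by
    rw [← Matrix.det_mul, h1, h3]
  rw [← h4, ← hdet, h5, hBss, hBcc, hBcs, hBsc]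
  have hs : (-1 : R)^(n+1) * (-1 : R)^(n+1) = 1 := by
    rw [← pow_add, ← two_mul, pow_mul, neg_one_sq, one_pow]
  linear_combination (-((X.submatrix Fin.castSucc Fin.succ).det
    * (X.submatrix Fin.succ Fin.castSucc).det * X.det)) * hs

end Helpers

lemma dodgson {n : ℕ} (X : Matrix (Fin (n+2)) (Fin (n+2)) ℂ) :
    X.det * (X.submatrix (fun i : Fin n => i.succ.castSucc)
        (fun j : Fin n => j.succ.castSucc)).det
    = (X.submatrix Fin.succ Fin.succ).det
        * (X.submatrix Fin.castSucc Fin.castSucc).det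
      - (X.submatrix Fin.castSucc Fin.succ).det
        * (X.submatrix Fin.succ Fin.castSucc).det := by
  set Y : Matrix (Fin (n+2)) (Fin (n+2)) (Polynomial ℂ) := charmatrix (-X) with hY
  have hne : Y.det ≠ 0 := by
    have : Y.det = (-X).charpoly := rfl
    rw [this]
    exact (Matrix.charpoly_monic _).ne_zero
  have key : Y.det * (Y.submatrix (fun i : Fin n => i.succ.castSucc)
        (fun j : Fin n => j.succ.castSucc)).det
      = (Y.submatrix Fin.succ Fin.succ).det
          * (Y.submatrix Fin.castSucc Fin.castSucc).det
        - (Y.submatrix Fin.castSucc Fin.succ).det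
          * (Y.submatrix Fin.succ Fin.castSucc).det :=
    mul_left_cancel₀ hne (dodgson_mul Y)
  have hYX : Y.map (Polynomial.evalRingHom (0 : ℂ)) = X := by
    ext i j
    rcases eq_or_ne i j with h | h
    · subst h
      simp [hY, charmatrix_apply_eq]
    · simp [hY, charmatrix_apply_ne _ _ _ h]
  have key2 := congrArg (Polynomial.evalRingHom (0 : ℂ)) key
  simp only [_root_.map_mul, map_sub, RingHom.map_det, RingHom.mapMatrix_apply,
    ← Matrix.submatrix_map, hYX] at key2
  exact key2

/-- **Determinant identity for an `(n+1) × n` array** (`n = m + 2 ≥ 2`):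
`det A({2,…,n+1},{1,…,n}) · det A({1,…,n−1},{2,…,n})
  = det A({1,…,n−1,n+1},{1,…,n}) · det A({2,…,n},{2,…,n})
    − det A({1,…,n},{1,…,n}) · det A({2,…,n−1,n+1},{2,…,n})`,
where `A(I,J)` denotes the square submatrix keeping the rows in `I` and the columns in `J`,
in increasing order. -/
theorem det_identity_rectangular (m : ℕ) (A : Matrix (Fin (m + 3)) (Fin (m + 2)) ℂ) :
    (A.submatrix (Fin.succ : Fin (m + 2) → Fin (m + 3)) id).det *
        (A.submatrix (fun i : Fin (m + 1) => i.castSucc.castSucc)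
          (Fin.succ : Fin (m + 1) → Fin (m + 2))).det =
      (A.submatrix ((⟨m + 1, by omega⟩ : Fin (m + 3)).succAbove) id).det *
          (A.submatrix (fun i : Fin (m + 1) => i.succ.castSucc)
            (Fin.succ : Fin (m + 1) → Fin (m + 2))).det -
        (A.submatrix (Fin.castSucc : Fin (m + 2) → Fin (m + 3)) id).det *
          (A.submatrix (fun i : Fin (m + 1) => ((⟨m, by omega⟩ : Fin (m + 2)).succAbove i).succ)
            (Fin.succ : Fin (m + 1) → Fin (m + 2))).det := by
  set P : Fin (m + 3) := ⟨m + 1, by omega⟩ with hP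
  set M : Matrix (Fin (m + 3)) (Fin (m + 3)) ℂ :=
    Matrix.of (fun i => Fin.snoc (A i) (if i = P then (1 : ℂ) else 0)) with hM
  have hMc : ∀ (i : Fin (m + 3)) (j : Fin (m + 2)), M i j.castSucc = A i j := by
    intro i j
    simp [hM, Fin.snoc_castSucc]
  have hMl : ∀ i : Fin (m + 3), M i (Fin.last (m + 2)) = if i = P then 1 else 0 := by
    intro i
    simp [hM, Fin.snoc_last]
  have h := dodgson (n := m + 1) M
  -- the four "castSucc-column" submatrices
  have hT2 : M.submatrix Fin.castSucc Fin.castSucc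
      = (A.submatrix (Fin.castSucc : Fin (m + 2) → Fin (m + 3)) id).submatrix id id := by
    ext i j
    simp [hMc]
  have hT4 : M.submatrix Fin.succ Fin.castSucc
      = (A.submatrix (Fin.succ : Fin (m + 2) → Fin (m + 3)) id).submatrix id id := by
    ext i j
    simp [hMc]
  have hTin : M.submatrix (fun i : Fin (m + 1) => i.succ.castSucc)
      (fun j : Fin (m + 1) => j.succ.castSucc)
      = A.submatrix (fun i : Fin (m + 1) => i.succ.castSucc)
          (Fin.succ : Fin (m + 1) → Fin (m + 2)) := by
    ext i j
    exact hMc _ _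
  -- det M
  have hT0 : M.det = -(A.submatrix (P.succAbove) id).det := by
    rw [det_single_column M P (Fin.last (m + 2)) (fun i => hMl i)]
    have hsig : ((-1 : ℂ)) ^ ((P : ℕ) + ((Fin.last (m + 2) : Fin (m + 3)) : ℕ)) = -1 := by
      rw [hP, Fin.val_last, show (m + 1) + (m + 2) = 2 * (m + 1) + 1 by omega, pow_succ,
        pow_mul, neg_one_sq, one_pow, one_mul]
    rw [hsig, Fin.succAbove_last]
    have : M.submatrix P.succAbove Fin.castSucc = A.submatrix P.succAbove id := by
      ext i j
      exact hMc _ _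
    rw [this]
    ring
  -- det (M.submatrix succ succ)
  have hT1 : (M.submatrix Fin.succ Fin.succ).det
      = -(A.submatrix (fun i : Fin (m + 1) => ((⟨m, by omega⟩ : Fin (m + 2)).succAbove i).succ)
          (Fin.succ : Fin (m + 1) → Fin (m + 2))).det := by
    have hcol : ∀ i : Fin (m + 2), (M.submatrix Fin.succ Fin.succ) i (Fin.last (m + 1))
        = if i = (⟨m, by omega⟩ : Fin (m + 2)) then 1 else 0 := by
      intro i
      rw [Matrix.submatrix_apply, Fin.succ_last, hMl]
      refine if_congr ?_ rfl rfl
      constructor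
      · intro h'
        have := congrArg Fin.val h'
        simp [hP, Fin.ext_iff] at this ⊢
        omega
      · rintro rfl
        rw [hP]
        ext
        simp
    rw [det_single_column _ (⟨m, by omega⟩ : Fin (m + 2)) (Fin.last (m + 1)) hcol]
    have hsig : ((-1 : ℂ)) ^ (((⟨m, by omega⟩ : Fin (m + 2)) : ℕ)
        + ((Fin.last (m + 1) : Fin (m + 2)) : ℕ)) = -1 := by
      rw [Fin.val_last, show m + (m + 1) = 2 * m + 1 by omega, pow_succ,
        pow_mul, neg_one_sq, one_pow, one_mul]
    rw [hsig, Fin.succAbove_last]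
    have : (M.submatrix Fin.succ Fin.succ).submatrix
        ((⟨m, by omega⟩ : Fin (m + 2)).succAbove) Fin.castSucc
        = A.submatrix (fun i : Fin (m + 1) => ((⟨m, by omega⟩ : Fin (m + 2)).succAbove i).succ)
          (Fin.succ : Fin (m + 1) → Fin (m + 2)) := by
      ext i j
      rw [Matrix.submatrix_apply, Matrix.submatrix_apply, Fin.succ_castSucc, hMc,
        Matrix.submatrix_apply]
    rw [this]
    ring
  -- det (M.submatrix castSucc succ)
  have hT3 : (M.submatrix Fin.castSucc Fin.succ).det
      = (A.submatrix (fun i : Fin (m + 1) => i.castSucc.castSucc)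
          (Fin.succ : Fin (m + 1) → Fin (m + 2))).det := by
    have hcol : ∀ i : Fin (m + 2), (M.submatrix Fin.castSucc Fin.succ) i (Fin.last (m + 1))
        = if i = Fin.last (m + 1) then 1 else 0 := by
      intro i
      rw [Matrix.submatrix_apply, Fin.succ_last, hMl]
      refine if_congr ?_ rfl rfl
      rw [hP]
      constructor
      · intro h'
        have := congrArg Fin.val h'
        simp [Fin.ext_iff] at this ⊢
        omega
      · rintro rfl
        ext
        simp
    rw [det_single_column _ (Fin.last (m + 1)) (Fin.last (m + 1)) hcol]
    have hsig : ((-1 : ℂ)) ^ (((Fin.last (m + 1) : Fin (m + 2)) : ℕ)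
        + ((Fin.last (m + 1) : Fin (m + 2)) : ℕ)) = 1 := by
      rw [Fin.val_last, ← two_mul, pow_mul, neg_one_sq, one_pow]
    rw [hsig, one_mul, Fin.succAbove_last]
    congr 1
    ext i j
    rw [Matrix.submatrix_apply, Matrix.submatrix_apply, Fin.succ_castSucc, hMc,
      Matrix.submatrix_apply]
  rw [hT0, hT1, hT2, hT3, hT4, hTin] at h
  simp only [Matrix.submatrix_id_id] at h
  linear_combination h
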